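/- Let $k \ge 2$, $0 \le i \le k-1$, and $n \ge 3k+2$. Then $S/((I(P_n^k), A_{n-k+i-1}) : x_{n-k+i}) \cong \big(K[x_1,\dots,x_{n-2k-1+i}]/I(P_{n-2k-1+i}^k)\big)[x_{n-k+i}]$, where $A_{n-k+i-1} = (x_{n-k},\dots,x_{n-k+i-1})$ (with $A_{n-k-1} = (0)$). -/

import Mathlib

open MvPolynomial

/-- The edge ideal of the `k`-th power of the path on `n` vertices in
`S = K[x_1,…,x_n]` (the variable `X t` for `t : Fin n` is `x_{t+1}` in 1-based labels):
generated by the `x_i x_j` with `0 < j - i ≤ k`. -/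
noncomputable def pathIdeal (K : Type*) [Field K] (n k : ℕ) :
    Ideal (MvPolynomial (Fin n) K) :=
  Ideal.span {m | ∃ i j : Fin n, (i : ℕ) < j ∧ (j : ℕ) - i ≤ k ∧ m = X i * X j}

/-- The edge ideal of the `k`-th power of the cycle on `n` vertices in `K[x_1,…,x_n]`. -/
noncomputable def cycleIdeal (K : Type*) [Field K] (n k : ℕ) :
    Ideal (MvPolynomial (Fin n) K) :=
  Ideal.span {m | ∃ i j : Fin n, (i : ℕ) < j ∧ ((j : ℕ) - i ≤ k ∨ n - k ≤ (j : ℕ) - i) ∧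
    m = X i * X j}

/-- The edge ideal, regarded in `K[x_1,…,x_n]`, of the `k`-th power of the path on the
consecutive vertices with 1-based labels `a,…,b`. -/
noncomputable def pathIdealOn (K : Type*) [Field K] (n k a b : ℕ) :
    Ideal (MvPolynomial (Fin n) K) :=
  Ideal.span {m | ∃ i j : Fin n, a ≤ (i : ℕ) + 1 ∧ (j : ℕ) + 1 ≤ b ∧ (i : ℕ) < j ∧
    (j : ℕ) - i ≤ k ∧ m = X i * X j}

/-- The monomial prime ideal `(x_a, x_{a+1}, …, x_b)` of `K[x_1,…,x_n]` (1-based labels). -/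
noncomputable def varSpan (K : Type*) [Field K] (n a b : ℕ) :
    Ideal (MvPolynomial (Fin n) K) :=
  Ideal.span {m | ∃ t : Fin n, a ≤ (t : ℕ) + 1 ∧ (t : ℕ) + 1 ≤ b ∧ m = X t}

/-- The depth of `S/I` with respect to the maximal graded ideal `(x_1,…,x_n)`:
the supremum of lengths of (weakly) regular sequences on `S/I` from `(x_1,…,x_n)`. -/
noncomputable def pdepth {K : Type*} [Field K] {n : ℕ} (I : Ideal (MvPolynomial (Fin n) K)) :
    ℕ∞ :=
  sSup {d : ℕ∞ | ∃ rs : List (MvPolynomial (Fin n) K),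
    (∀ r ∈ rs, r ∈ Ideal.span (Set.range (X (R := K) (σ := Fin n)))) ∧
    RingTheory.Sequence.IsWeaklyRegular (MvPolynomial (Fin n) K ⧸ I) rs ∧
    (rs.length : ℕ∞) = d}

/-- The set of exponent vectors of monomials belonging to a (monomial) ideal `I`. -/
def monSet {K : Type*} [Field K] {n : ℕ} (I : Ideal (MvPolynomial (Fin n) K)) :
    Set (Fin n → ℕ) :=
  {a | (∏ i, X i ^ a i : MvPolynomial (Fin n) K) ∈ I}

/-- The set of exponent vectors of the monomials of the Stanley space `x^a K[W]`. -/
def stanleyInterval {n : ℕ} (a : Fin n → ℕ) (W : Finset (Fin n)) : Set (Fin n → ℕ) :=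
  {c | (∀ i, a i ≤ c i) ∧ ∀ i ∉ W, c i = a i}

/-- The Stanley depth of `J/I` for monomial ideals `I ⊆ J` of `K[x_1,…,x_n]`: the largest
`d` such that the monomials of `J \ I` can be partitioned into finitely many Stanley spaces
`x^a K[W]` with `|W| ≥ d` (by Herzog–Vladoiu–Zheng this agrees with the Stanley depth of the
`ℤⁿ`-graded module `J/I` defined via Stanley decompositions). -/
noncomputable def sdepthQuot {K : Type*} [Field K] {n : ℕ}
    (I J : Ideal (MvPolynomial (Fin n) K)) : ℕ :=
  sSup {d : ℕ | ∃ P : Finset ((Fin n → ℕ) × Finset (Fin n)),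
    (∀ p ∈ P, d ≤ p.2.card) ∧
    ∀ c : Fin n → ℕ, (c ∈ monSet J ∧ c ∉ monSet I) ↔
      ∃! p, p ∈ P ∧ c ∈ stanleyInterval p.1 p.2}

private lemma xSingle {K : Type*} [Field K] {σ : Type*} (t : σ) :
    (X t : MvPolynomial σ K) = monomial (Finsupp.single t 1) 1 := by
  rw [← X_pow_eq_monomial, pow_one]

private lemma xMul {K : Type*} [Field K] {σ : Type*} (p q : σ) :
    (X p * X q : MvPolynomial σ K) =
      monomial (Finsupp.single p 1 + Finsupp.single q 1) 1 := by
  rw [xSingle, xSingle, monomial_mul, one_mul]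

/-- generators of `I(P_n^k) + A` as exponent vectors -/
def E1 (n k i : ℕ) : Set (Fin n →₀ ℕ) :=
  {e | (∃ p q : Fin n, (p : ℕ) < q ∧ (q : ℕ) - p ≤ k ∧
          e = Finsupp.single p 1 + Finsupp.single q 1) ∨
       (∃ t : Fin n, n - k ≤ (t : ℕ) + 1 ∧ (t : ℕ) + 1 ≤ n - k + i - 1 ∧
          e = Finsupp.single t 1)}

/-- generators of the colon ideal as exponent vectors -/
def E2 (n k i : ℕ) : Set (Fin n →₀ ℕ) :=
  {e | (∃ p q : Fin n, (p : ℕ) < q ∧ (q : ℕ) - p ≤ k ∧ (q : ℕ) < n - 2 * k - 1 + i ∧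
          e = Finsupp.single p 1 + Finsupp.single q 1) ∨
       (∃ t : Fin n, n - 2 * k - 1 + i ≤ (t : ℕ) ∧ (t : ℕ) ≠ n - k + i - 1 ∧
          e = Finsupp.single t 1)}

private lemma spanE1 (K : Type*) [Field K] (n k i : ℕ) :
    pathIdeal K n k ⊔ varSpan K n (n - k) (n - k + i - 1) =
      Ideal.span ((fun s => monomial s (1 : K)) '' E1 n k i) := by
  rw [pathIdeal, varSpan, ← Ideal.span_union]
  congr 1
  ext f
  simp only [Set.mem_union, Set.mem_setOf_eq, Set.mem_image, E1]
  constructor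
  · rintro (⟨p, q, h1, h2, rfl⟩ | ⟨t, h1, h2, rfl⟩)
    · exact ⟨_, Or.inl ⟨p, q, h1, h2, rfl⟩, (xMul p q).symm⟩
    · exact ⟨_, Or.inr ⟨t, h1, h2, rfl⟩, (xSingle t).symm⟩
  · rintro ⟨e, ⟨p, q, h1, h2, rfl⟩ | ⟨t, h1, h2, rfl⟩, rfl⟩
    · exact Or.inl ⟨p, q, h1, h2, (xMul p q).symm⟩
    · exact Or.inr ⟨t, h1, h2, (xSingle t).symm⟩

private lemma core (n k i : ℕ) (hk : 2 ≤ k) (hi : i ≤ k - 1) (hn : 3 * k + 2 ≤ n)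
    (a : Fin n →₀ ℕ) :
    (∃ e ∈ E1 n k i, e ≤ a + Finsupp.single (⟨n - k + i - 1, by have := hk; omega⟩ : Fin n) 1) ↔
      ∃ e ∈ E2 n k i, e ≤ a := by
  set v : Fin n := ⟨n - k + i - 1, by have := hk; omega⟩ with hv
  have hvval : (v : ℕ) = n - k + i - 1 := rfl
  constructor
  · rintro ⟨e, he, hle⟩
    rw [Finsupp.le_def] at hle
    rcases he with ⟨p, q, hpq, hd, rfl⟩ | ⟨t, h1, h2, rfl⟩
    · by_cases hqv : (q : ℕ) = (v : ℕ)
      · -- q = v : take single p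
        have hap : 1 ≤ a p := by
          have h := hle p
          simp only [Finsupp.add_apply, Finsupp.single_apply, Fin.ext_iff] at h
          split_ifs at h <;> omega
        exact ⟨Finsupp.single p 1, Or.inr ⟨p, by omega, by omega, rfl⟩,
          Finsupp.single_le_iff.mpr hap⟩
      · by_cases hpv : (p : ℕ) = (v : ℕ)
        · -- p = v : take single q
          have haq : 1 ≤ a q := by
            have h := hle q
            simp only [Finsupp.add_apply, Finsupp.single_apply, Fin.ext_iff] at h
            split_ifs at h <;> omega
          exact ⟨Finsupp.single q 1, Or.inr ⟨q, by omega, by omega, rfl⟩,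
            Finsupp.single_le_iff.mpr haq⟩
        · -- v not an endpoint
          have hea : (Finsupp.single p 1 + Finsupp.single q 1 : Fin n →₀ ℕ) ≤ a := by
            rw [Finsupp.le_def]
            intro r
            have h := hle r
            simp only [Finsupp.add_apply, Finsupp.single_apply, Fin.ext_iff] at h ⊢
            split_ifs at h ⊢ <;> omega
          by_cases hqm : (q : ℕ) < n - 2 * k - 1 + i
          · exact ⟨_, Or.inl ⟨p, q, hpq, hd, hqm, rfl⟩, hea⟩
          · refine ⟨Finsupp.single q 1, Or.inr ⟨q, by omega, by omega, rfl⟩, ?_⟩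
            refine le_trans ?_ hea
            rw [Finsupp.le_def]
            intro r
            simp only [Finsupp.add_apply, Finsupp.single_apply]
            split_ifs <;> omega
    · -- A-part generator
      have hat : 1 ≤ a t := by
        have h := hle t
        simp only [Finsupp.add_apply, Finsupp.single_apply, Fin.ext_iff] at h
        split_ifs at h <;> omega
      exact ⟨Finsupp.single t 1, Or.inr ⟨t, by omega, by omega, rfl⟩,
        Finsupp.single_le_iff.mpr hat⟩
  · rintro ⟨e, he, hle⟩
    rcases he with ⟨p, q, hpq, hd, hqm, rfl⟩ | ⟨t, htm, htv, rfl⟩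
    · exact ⟨_, Or.inl ⟨p, q, hpq, hd, rfl⟩, le_trans hle le_self_add⟩
    · have htn : (t : ℕ) < n := t.isLt
      have hat : 1 ≤ a t := Finsupp.single_le_iff.mp hle
      have hpair : (Finsupp.single t 1 + Finsupp.single v 1 : Fin n →₀ ℕ) ≤
          a + Finsupp.single v 1 := by
        rw [Finsupp.le_def]
        intro r
        rcases eq_or_ne t r with rfl | hr
        · have : ¬ (v : ℕ) = (t : ℕ) := by omega
          simp only [Finsupp.add_apply, Finsupp.single_apply, Fin.ext_iff]
          split_ifs <;> omega
        · have : ¬ (t : ℕ) = (r : ℕ) := fun hh => hr (Fin.ext hh)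
          simp only [Finsupp.add_apply, Finsupp.single_apply, Fin.ext_iff]
          split_ifs <;> omega
      rcases lt_or_gt_of_ne (show (t : ℕ) ≠ (v : ℕ) from htv) with h | h
      · exact ⟨Finsupp.single t 1 + Finsupp.single v 1,
          Or.inl ⟨t, v, h, by omega, rfl⟩, hpair⟩
      · exact ⟨Finsupp.single t 1 + Finsupp.single v 1,
          Or.inl ⟨v, t, h, by omega, add_comm _ _⟩, hpair⟩

private lemma colon_eq (K : Type*) [Field K] (n k i : ℕ) (hk : 2 ≤ k) (hi : i ≤ k - 1)
    (hn : 3 * k + 2 ≤ n) :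
    (pathIdeal K n k ⊔ varSpan K n (n - k) (n - k + i - 1)).colon
        ((Ideal.span {X (⟨n - k + i - 1, by have := hk; omega⟩ : Fin n)} : Ideal (MvPolynomial (Fin n) K)) :
          Set (MvPolynomial (Fin n) K)) =
      Ideal.span ((fun s => monomial s (1 : K)) '' E2 n k i) := by
  ext f
  rw [Ideal.mem_colon_span_singleton, spanE1, mem_ideal_span_monomial_image,
    mem_ideal_span_monomial_image]
  rw [support_mul_X]
  simp only [Finset.mem_map, addRightEmbedding_apply]
  constructor
  · intro h a ha
    exact (core n k i hk hi hn a).mp (h _ ⟨a, ha, rfl⟩)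
  · rintro h b ⟨a, ha, rfl⟩
    exact (core n k i hk hi hn a).mpr (h a ha)

section Part2

variable (K : Type*) [Field K] (n k i : ℕ)

/-- the colon ideal, as a span of monomials -/
noncomputable def JI : Ideal (MvPolynomial (Fin n) K) :=
  Ideal.span ((fun s => monomial s (1 : K)) '' E2 n k i)

/-- the target ring -/
noncomputable abbrev Tgt : Type _ :=
  Polynomial (MvPolynomial (Fin (n - 2 * k - 1 + i)) K ⧸ pathIdeal K (n - 2 * k - 1 + i) k)

noncomputable def fmap (t : Fin n) : Tgt K n k i :=
  if h : (t : ℕ) < n - 2 * k - 1 + i then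
    Polynomial.C (Ideal.Quotient.mk _ (X (⟨t, h⟩ : Fin (n - 2 * k - 1 + i))))
  else if (t : ℕ) = n - k + i - 1 then Polynomial.X else 0

noncomputable def phi0 : MvPolynomial (Fin n) K →+* Tgt K n k i :=
  (aeval (fmap K n k i)).toRingHom

lemma phi0_X (t : Fin n) : phi0 K n k i (X t) = fmap K n k i t := aeval_X _ _

lemma phi0_C (r : K) : phi0 K n k i (C r) =
    Polynomial.C (Ideal.Quotient.mk _ (C r)) := by
  show aeval _ (C r) = _
  rw [aeval_C]
  rfl

lemma phi0_ker : JI K n k i ≤ RingHom.ker (phi0 K n k i) := by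
  rw [JI, Ideal.span_le]
  rintro x ⟨e, he, rfl⟩
  simp only [SetLike.mem_coe, RingHom.mem_ker]
  rcases he with ⟨p, q, hpq, hd, hqm, rfl⟩ | ⟨t, htm, htv, rfl⟩
  · have hp : (p : ℕ) < n - 2 * k - 1 + i := by omega
    have hmem : (X (⟨p, hp⟩ : Fin (n - 2 * k - 1 + i)) * X ⟨q, hqm⟩ : MvPolynomial _ K) ∈
        pathIdeal K (n - 2 * k - 1 + i) k := by
      rw [pathIdeal]
      exact Ideal.subset_span ⟨⟨p, hp⟩, ⟨q, hqm⟩, hpq, hd, rfl⟩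
    rw [← xMul, map_mul, phi0_X, phi0_X, fmap, fmap, dif_pos hp, dif_pos hqm,
      ← map_mul, ← map_mul, Ideal.Quotient.eq_zero_iff_mem.mpr hmem, map_zero]
  · rw [← xSingle, phi0_X, fmap, dif_neg (by omega), if_neg htv]

noncomputable def phi : (MvPolynomial (Fin n) K ⧸ JI K n k i) →+* Tgt K n k i :=
  Ideal.Quotient.lift _ (phi0 K n k i)
    (fun _ ha => RingHom.mem_ker.mp (phi0_ker K n k i ha))

variable (hmn : n - 2 * k - 1 + i ≤ n)

noncomputable def base0 :
    MvPolynomial (Fin (n - 2 * k - 1 + i)) K →+* MvPolynomial (Fin n) K ⧸ JI K n k i :=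
  (Ideal.Quotient.mk _).comp (rename (Fin.castLE hmn)).toRingHom

lemma base0_X (t : Fin (n - 2 * k - 1 + i)) :
    base0 K n k i hmn (X t) = Ideal.Quotient.mk _ (X (Fin.castLE hmn t)) := by
  simp [base0, rename_X]

lemma base0_ker : pathIdeal K (n - 2 * k - 1 + i) k ≤ RingHom.ker (base0 K n k i hmn) := by
  rw [pathIdeal, Ideal.span_le]
  rintro x ⟨p, q, hpq, hd, rfl⟩
  simp only [SetLike.mem_coe, RingHom.mem_ker, base0, RingHom.comp_apply,
    AlgHom.toRingHom_eq_coe, RingHom.coe_coe, map_mul, rename_X]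
  rw [← map_mul, Ideal.Quotient.eq_zero_iff_mem]
  exact Ideal.subset_span ⟨_, Or.inl ⟨Fin.castLE hmn p, Fin.castLE hmn q, hpq, hd,
    q.isLt, rfl⟩, (xMul _ _).symm⟩

noncomputable def base :
    (MvPolynomial (Fin (n - 2 * k - 1 + i)) K ⧸ pathIdeal K (n - 2 * k - 1 + i) k) →+*
      MvPolynomial (Fin n) K ⧸ JI K n k i :=
  Ideal.Quotient.lift _ (base0 K n k i hmn)
    (fun _ ha => RingHom.mem_ker.mp (base0_ker K n k i hmn ha))

variable (hvn : n - k + i - 1 < n)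

noncomputable def psi : Tgt K n k i →+* MvPolynomial (Fin n) K ⧸ JI K n k i :=
  Polynomial.eval₂RingHom (base K n k i hmn)
    (Ideal.Quotient.mk _ (X (⟨n - k + i - 1, hvn⟩ : Fin n)))

lemma psi_phi (hk : 2 ≤ k) (hi : i ≤ k - 1) (hn : 3 * k + 2 ≤ n) :
    (psi K n k i hmn hvn).comp (phi K n k i) = RingHom.id _ := by
  apply Ideal.Quotient.ringHom_ext
  apply MvPolynomial.ringHom_ext
  · intro r
    simp only [RingHom.comp_apply, Ideal.Quotient.mk_algebraMap, phi,
      Ideal.Quotient.lift_mk, phi0_C, psi, Polynomial.coe_eval₂RingHom,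
      Polynomial.eval₂_C, base, base0, RingHom.comp_apply, AlgHom.toRingHom_eq_coe,
      RingHom.coe_coe, rename_C, RingHom.id_apply]
  · intro t
    simp only [RingHom.comp_apply, phi, Ideal.Quotient.lift_mk, phi0_X,
      RingHom.id_apply]
    rw [fmap]
    split_ifs with h1 h2
    · simp only [psi, Polynomial.coe_eval₂RingHom, Polynomial.eval₂_C, base,
        Ideal.Quotient.lift_mk, base0_X]
      first
      | rfl
      | · congr 2
          exact Fin.ext rfl
    · simp only [psi, Polynomial.coe_eval₂RingHom, Polynomial.eval₂_X]
      first
      | rfl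
      | · congr 2
          exact Fin.ext h2.symm
    · rw [map_zero]
      symm
      rw [Ideal.Quotient.eq_zero_iff_mem, JI]
      exact Ideal.subset_span ⟨_, Or.inr ⟨t, by omega, h2, rfl⟩, (xSingle t).symm⟩

lemma phi_psi (hk : 2 ≤ k) (hi : i ≤ k - 1) (hn : 3 * k + 2 ≤ n) :
    (phi K n k i).comp (psi K n k i hmn hvn) = RingHom.id _ := by
  apply Polynomial.ringHom_ext'
  · apply Ideal.Quotient.ringHom_ext
    apply MvPolynomial.ringHom_ext
    · intro r
      simp only [RingHom.comp_apply, psi, Polynomial.coe_eval₂RingHom,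
        Polynomial.eval₂_C, base, Ideal.Quotient.lift_mk, base0, RingHom.comp_apply,
        AlgHom.toRingHom_eq_coe, RingHom.coe_coe, rename_C, phi, phi0_C,
        RingHom.id_apply]
    · intro t
      simp only [RingHom.comp_apply, psi, Polynomial.coe_eval₂RingHom,
        Polynomial.eval₂_C, base, Ideal.Quotient.lift_mk, base0_X, phi, phi0_X,
        RingHom.id_apply]
      rw [fmap, dif_pos (show ((Fin.castLE hmn t : Fin n) : ℕ) < n - 2 * k - 1 + i from t.isLt)]
      first
      | rfl
      | · congr 2
          exact Fin.ext rfl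
  · simp only [RingHom.comp_apply, psi, Polynomial.coe_eval₂RingHom, Polynomial.eval₂_X,
      phi, Ideal.Quotient.lift_mk, phi0_X, RingHom.id_apply]
    rw [fmap, dif_neg (show ¬ (n - k + i - 1 < n - 2 * k - 1 + i) by omega), if_pos rfl]

end Part2

theorem stmt7 (K : Type*) [Field K] (n k i : ℕ) (hk : 2 ≤ k) (hi : i ≤ k - 1)
    (hn : 3 * k + 2 ≤ n) :
    Nonempty ((MvPolynomial (Fin n) K ⧸
        ((pathIdeal K n k ⊔ varSpan K n (n - k) (n - k + i - 1)).colon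
          ((Ideal.span {X (⟨n - k + i - 1, by omega⟩ : Fin n)} : Ideal (MvPolynomial (Fin n) K)) :
            Set (MvPolynomial (Fin n) K)))) ≃+*
      Polynomial (MvPolynomial (Fin (n - 2 * k - 1 + i)) K ⧸
        pathIdeal K (n - 2 * k - 1 + i) k)) := by
  refine ⟨(Ideal.quotEquivOfEq ?_).trans
    (RingEquiv.ofRingHom (phi K n k i) (psi K n k i (by omega) (by omega))
      (phi_psi K n k i _ _ hk hi hn) (psi_phi K n k i _ _ hk hi hn))⟩
  rw [JI]
  exact colon_eq K n k i hk hi hn
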